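/- arXiv:2301.05385 — 3 statements merged into one kernel-verified Lean document; each statement's English description precedes it below -/
import Mathlib

section
/- Let S_1,...,S_n be i.i.d. continuous random variables with cdf F satisfying ∫_0^x F^{k-1}(y) dF(y) = F^k(x)/k for all integers k ≥ 1 and x > 0. Let v_1 < ... < v_k be vertices with domination neighbourhoods D(v_l) satisfying the weak-nested property: v_k ∉ C(v_k) and v_l ∈ D(v_{l+1}) \ C(v_l) for 1 ≤ l ≤ k-1, where C(v_l) = ∪_{j≤l} D(v_j) and c(v_l) = 1 + #C(v_l). Then the probability that every v_l is a weighted dominating vertex equals ∏_{l=1}^k 1/c(v_l). -/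
open MeasureTheory ProbabilityTheory Set Function
open scoped ENNReal

section helpers
variable {n : ℕ} {μ : Measure ℝ} [IsProbabilityMeasure μ]

/-- Peel one coordinate off a lintegral over a pi measure. -/
lemma wds_peel (i : Fin n) (f : (Fin n → ℝ) → ℝ≥0∞) (hf : Measurable f) :
    ∫⁻ y, f y ∂(Measure.pi fun _ : Fin n => μ)
      = ∫⁻ t, ∫⁻ y, f (Function.update y i t) ∂(Measure.pi fun _ : Fin n => μ) ∂μ := by
  classical
  rw [lintegral_eq_lmarginal_univ (μ := fun _ : Fin n => μ) (fun _ => (0:ℝ)),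
    lmarginal_erase _ hf (Finset.mem_univ i)]
  refine lintegral_congr fun t => ?_
  rw [lmarginal_update_of_notMem hf (Finset.notMem_erase i _)]
  set g : (Fin n → ℝ) → ℝ≥0∞ := f ∘ (Function.update · i t) with hg_def
  have hg : Measurable g := hf.comp measurable_update_left
  have hkey : ∀ y s, g (Function.update y i s) = g y := by
    intro y s; simp only [hg_def, comp_apply, Function.update_idem]
  have h1 : (∫⋯∫⁻_Finset.univ, g ∂(fun _ : Fin n => μ)) (fun _ => (0:ℝ))
      = ∫⁻ t', (∫⋯∫⁻_(Finset.univ.erase i), g ∂(fun _ : Fin n => μ))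
          (Function.update (fun _ => (0:ℝ)) i t') ∂μ :=
    lmarginal_erase _ hg (Finset.mem_univ i) _
  have h2 : ∀ t', (∫⋯∫⁻_(Finset.univ.erase i), g ∂(fun _ : Fin n => μ))
      (Function.update (fun _ => (0:ℝ)) i t') = (∫⋯∫⁻_(Finset.univ.erase i), g ∂(fun _ : Fin n => μ))
      (fun _ => (0:ℝ)) := by
    intro t'
    rw [lmarginal_update_of_notMem hg (Finset.notMem_erase i _)]
    congr 1
    ext y
    exact hkey y t'
  have h3 : (∫⋯∫⁻_Finset.univ, g ∂(fun _ : Fin n => μ)) (fun _ => (0:ℝ))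
      = (∫⋯∫⁻_(Finset.univ.erase i), g ∂(fun _ : Fin n => μ)) (fun _ => (0:ℝ)) := by
    rw [h1]
    simp_rw [h2]
    simp
  rw [← h3, lmarginal_univ]
  rfl

lemma wds_peel_set (i : Fin n) (A : Set (Fin n → ℝ)) (hA : MeasurableSet A) :
    (Measure.pi fun _ : Fin n => μ) A
      = ∫⁻ t, (Measure.pi fun _ : Fin n => μ) {y | Function.update y i t ∈ A} ∂μ := by
  have h := wds_peel (μ := μ) i (A.indicator fun _ => (1:ℝ≥0∞)) (measurable_one.indicator hA)
  rw [lintegral_indicator hA _, setLIntegral_one] at h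
  rw [h]
  refine lintegral_congr fun t => ?_
  have : ∀ y : Fin n → ℝ, A.indicator (fun _ => (1:ℝ≥0∞)) (Function.update y i t)
      = ({y | Function.update y i t ∈ A}).indicator (fun _ => (1:ℝ≥0∞)) y := by
    intro y; by_cases hy : Function.update y i t ∈ A <;>
      simp [Set.indicator_apply, hy]
  simp_rw [this]
  have hm : MeasurableSet {y : Fin n → ℝ | Function.update y i t ∈ A} :=
    measurable_update_left hA
  rw [lintegral_indicator hm _, setLIntegral_one]

lemma wds_block_meas (G : Finset (Fin n)) (t : ℝ) :
    MeasurableSet {y : Fin n → ℝ | ∀ w ∈ G, y w < t} := by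
  have : {y : Fin n → ℝ | ∀ w ∈ G, y w < t} = ⋂ w ∈ G, {y | y w < t} := by
    ext y; simp
  rw [this]
  exact MeasurableSet.biInter (Set.to_countable _)
    (fun u _ => measurableSet_lt (measurable_pi_apply u) measurable_const)

lemma wds_strip_block (A : Set (Fin n → ℝ)) (hA : MeasurableSet A) (G : Finset (Fin n))
    (hGA : ∀ w ∈ G, ∀ y t', Function.update y w t' ∈ A ↔ y ∈ A) (t : ℝ) :
    (Measure.pi fun _ : Fin n => μ) (A ∩ {y | ∀ w ∈ G, y w < t})
      = (Measure.pi fun _ : Fin n => μ) A * (μ (Set.Iio t)) ^ G.card := by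
  classical
  induction G using Finset.induction with
  | empty => simp
  | @insert w G hw ih =>
    set A' := A ∩ {y | ∀ u ∈ G, y u < t} with hA'def
    have hA' : MeasurableSet A' := hA.inter (wds_block_meas G t)
    have hset : A ∩ {y | ∀ u ∈ insert w G, y u < t} = A' ∩ {y | y w < t} := by
      ext y
      simp only [hA'def, Set.mem_inter_iff, Set.mem_setOf_eq, Finset.mem_insert]
      constructor
      · rintro ⟨h1, h2⟩
        exact ⟨⟨h1, fun u hu => h2 u (Or.inr hu)⟩, h2 w (Or.inl rfl)⟩
      · rintro ⟨⟨h1, h2⟩, h3⟩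
        exact ⟨h1, fun u hu => hu.elim (fun h => h ▸ h3) (h2 u)⟩
    rw [hset, wds_peel_set w _ (hA'.inter (measurableSet_lt (measurable_pi_apply w)
      measurable_const))]
    have hslice : ∀ s : ℝ, (Measure.pi fun _ : Fin n => μ)
        {y : Fin n → ℝ | Function.update y w s ∈ A' ∩ {y | y w < t}}
        = (Set.Iio t).indicator (fun _ => (Measure.pi fun _ : Fin n => μ) A') s := by
      intro s
      have hupd : ∀ y : Fin n → ℝ, Function.update y w s ∈ A' ↔ y ∈ A' := by
        intro y
        refine and_congr (hGA w (Finset.mem_insert_self w G) y s) ?_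
        constructor
        · intro h u hu
          have := h u hu
          rwa [Function.update_of_ne (by rintro rfl; exact hw hu)] at this
        · intro h u hu
          rw [Function.update_of_ne (by rintro rfl; exact hw hu)]
          exact h u hu
      by_cases hs : s < t
      · have : {y : Fin n → ℝ | Function.update y w s ∈ A' ∩ {y | y w < t}} = A' := by
          ext y
          simp only [Set.mem_inter_iff, Set.mem_setOf_eq, Function.update_self, hupd y]
          exact and_iff_left hs
        rw [this]
        simp [Set.indicator_apply, hs]
      · have : {y : Fin n → ℝ | Function.update y w s ∈ A' ∩ {y | y w < t}} = ∅ := by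
          ext y
          simp only [Set.mem_inter_iff, Set.mem_setOf_eq, Function.update_self,
            Set.mem_empty_iff_false, iff_false]
          exact fun h => hs h.2
        rw [this]
        simp [Set.indicator_apply, hs]
    simp_rw [hslice]
    rw [lintegral_indicator_const measurableSet_Iio,
      ih (fun u hu => hGA u (Finset.mem_insert_of_mem hu)),
      Finset.card_insert_of_notMem hw, pow_succ]
    ring
end helpers

lemma wds_keyInt (μ : Measure ℝ) [IsProbabilityMeasure μ] (F : ℝ → ℝ)
    (hF : ∀ x, F x = (μ (Set.Iic x)).toReal)
    (hpoint : ∀ x : ℝ, μ {x} = 0)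
    (hint : ∀ m : ℕ, 1 ≤ m → ∀ x : ℝ, 0 < x →
      ∫ y in Set.Ioc (0:ℝ) x, F y ^ (m - 1) ∂μ = F x ^ m / m) :
    ∀ m : ℕ, 1 ≤ m → ∀ t : ℝ,
      ∫⁻ u in Set.Iio t, (μ (Set.Iio u)) ^ (m - 1) ∂μ = (μ (Set.Iio t)) ^ m / m := by
  have hIic : ∀ x : ℝ, μ (Set.Iio x) = μ (Set.Iic x) := by
    intro x
    refine le_antisymm (measure_mono Set.Iio_subset_Iic_self) ?_
    calc μ (Set.Iic x) ≤ μ (Set.Iio x ∪ {x}) := by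
          refine measure_mono fun y hy => ?_
          rcases lt_or_eq_of_le (Set.mem_Iic.mp hy) with h | h
          · exact Or.inl h
          · exact Or.inr (by simpa using h)
      _ ≤ μ (Set.Iio x) + μ {x} := measure_union_le _ _
      _ = μ (Set.Iio x) := by rw [hpoint, add_zero]
  have hFnonneg : ∀ x, 0 ≤ F x := fun x => (hF x) ▸ ENNReal.toReal_nonneg
  have hFle1 : ∀ x, F x ≤ 1 := by
    intro x
    rw [hF x]
    exact ENNReal.toReal_le_of_le_ofReal zero_le_one (by simpa using prob_le_one)
  have hFofReal : ∀ x, μ (Set.Iic x) = ENNReal.ofReal (F x) := by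
    intro x; rw [hF x, ENNReal.ofReal_toReal (measure_ne_top μ _)]
  have hFmono : Monotone F := by
    intro a b hab
    rw [hF a, hF b]
    exact ENNReal.toReal_mono (measure_ne_top μ _) (measure_mono (Set.Iic_subset_Iic.mpr hab))
  have hFmeas : Measurable F := hFmono.measurable
  have h0 : μ (Set.Iic 0) = 0 := by
    have h1 := hint 1 le_rfl 1 one_pos
    simp only [Nat.sub_self, pow_zero, pow_one] at h1
    rw [setIntegral_const] at h1
    simp only [smul_eq_mul, mul_one, Nat.cast_one, div_one] at h1
    have h2 : μ (Set.Ioc (0:ℝ) 1) = μ (Set.Iic (1:ℝ)) := by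
      have := h1.trans (hF 1)
      exact (ENNReal.toReal_eq_toReal_iff' (measure_ne_top μ _) (measure_ne_top μ _)).mp this
    have h3 : μ (Set.Iic (0:ℝ)) + μ (Set.Ioc (0:ℝ) 1) = μ (Set.Iic (1:ℝ)) := by
      rw [← measure_union (Set.Iic_disjoint_Ioc le_rfl) measurableSet_Ioc,
        Set.Iic_union_Ioc_eq_Iic zero_le_one]
    rw [← h2] at h3
    have h4 := measure_ne_top μ (Set.Ioc (0:ℝ) 1)
    have h5 : μ (Set.Iic (0:ℝ)) + μ (Set.Ioc (0:ℝ) 1) = 0 + μ (Set.Ioc (0:ℝ) 1) := by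
      rw [h3, zero_add]
    exact (ENNReal.add_left_inj h4).mp h5
  intro m hm t
  rcases le_or_gt t 0 with ht | ht
  · have hz : μ (Set.Iio t) = 0 :=
      le_antisymm ((measure_mono (Set.Iio_subset_Iic_self.trans
        (Set.Iic_subset_Iic.mpr ht))).trans h0.le) zero_le
    rw [Measure.restrict_eq_zero.mpr hz, lintegral_zero_measure, hz,
      zero_pow (by omega : m ≠ 0), ENNReal.zero_div]
  · have hae : (Set.Iio t : Set ℝ) =ᵐ[μ] Set.Ioc (0:ℝ) t := by
      rw [MeasureTheory.ae_eq_set]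
      constructor
      · refine measure_mono_null (fun y hy => ?_) h0
        simp only [Set.mem_diff, Set.mem_Iio, Set.mem_Ioc, not_and, not_le] at hy
        simp only [Set.mem_Iic]
        by_contra hc
        push_neg at hc
        exact absurd (hy.2 hc) (not_lt.mpr hy.1.le)
      · refine measure_mono_null (fun y hy => ?_) (hpoint t)
        simp only [Set.mem_diff, Set.mem_Ioc, Set.mem_Iio, not_lt] at hy
        simp only [Set.mem_singleton_iff]
        exact le_antisymm hy.1.2 hy.2
    rw [setLIntegral_congr hae]
    have hcongr : ∀ u : ℝ, (μ (Set.Iio u)) ^ (m - 1) = ENNReal.ofReal (F u ^ (m - 1)) := by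
      intro u
      rw [hIic, hFofReal, ENNReal.ofReal_pow (hFnonneg u)]
    simp_rw [hcongr]
    have hintg : Integrable (fun u => F u ^ (m - 1)) (μ.restrict (Set.Ioc (0:ℝ) t)) := by
      refine Integrable.mono' (integrable_const (1:ℝ))
        ((hFmeas.pow_const (m-1)).aestronglyMeasurable) (ae_of_all _ fun u => ?_)
      rw [Real.norm_eq_abs, abs_of_nonneg (pow_nonneg (hFnonneg u) _)]
      exact pow_le_one₀ (hFnonneg u) (hFle1 u)
    rw [← MeasureTheory.ofReal_integral_eq_lintegral_ofReal hintg
      (ae_of_all _ fun u => pow_nonneg (hFnonneg u) _)]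
    rw [hint m hm t ht]
    rw [hIic, hFofReal]
    rw [ENNReal.ofReal_div_of_pos (by exact_mod_cast Nat.lt_of_lt_of_le Nat.zero_lt_one hm),
      ENNReal.ofReal_pow (hFnonneg t), ENNReal.ofReal_natCast]

set_option maxHeartbeats 2000000 in
/-- Under the weak-nested property of the domination neighbourhoods, the probability that
every `v l` is a weighted dominating vertex equals `∏ l, 1 / c (v l)`, where
`c (v l) = 1 + #(⋃_{j ≤ l} D (v j))`. -/
theorem weighted_dominating_set_prob
    {Ω : Type*} [MeasurableSpace Ω] (P : Measure Ω) [IsProbabilityMeasure P]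
    (n : ℕ) (S : Fin n → Ω → ℝ)
    (hmeas : ∀ i, Measurable (S i))
    (hindep : iIndepFun S P)
    (hident : ∀ i j, Measure.map (S i) P = Measure.map (S j) P)
    (hcont : ∀ i (x : ℝ), P {ω | S i ω = x} = 0)
    (F : ℝ → ℝ) (hF : ∀ i x, F x = (P {ω | S i ω ≤ x}).toReal)
    (hint : ∀ (i : Fin n) (m : ℕ), 1 ≤ m → ∀ x : ℝ, 0 < x →
      ∫ y in Set.Ioc (0 : ℝ) x, F y ^ (m - 1) ∂(Measure.map (S i) P) = F x ^ m / m)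
    (k : ℕ) (v : Fin (k + 1) → Fin n) (hmono : StrictMono v)
    (D : Fin n → Finset (Fin n)) (hDnot : ∀ i, i ∉ D i)
    (hlast : v (Fin.last k) ∉ (Finset.Iic (Fin.last k)).biUnion (fun j => D (v j)))
    (hnest : ∀ l : Fin k, v l.castSucc ∈ D (v l.succ) ∧
      v l.castSucc ∉ (Finset.Iic l.castSucc).biUnion (fun j => D (v j))) :
    P {ω | ∀ l : Fin (k + 1), ∀ u ∈ D (v l), S u ω < S (v l) ω} =
      ∏ l : Fin (k + 1),
        (1 : ℝ≥0∞) / (((Finset.Iic l).biUnion (fun j => D (v j))).card + 1) := by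
  classical
  set i0 : Fin n := v 0 with hi0
  set μ : Measure ℝ := Measure.map (S i0) P with hμdef
  haveI : IsProbabilityMeasure μ := Measure.isProbabilityMeasure_map (hmeas i0).aemeasurable
  have hmapS : ∀ i, Measure.map (S i) P = μ := fun i => hident i i0
  have hμIic : ∀ (i : Fin n) (x : ℝ), P {ω | S i ω ≤ x} = μ (Set.Iic x) := by
    intro i x
    rw [← hmapS i, Measure.map_apply (hmeas i) measurableSet_Iic]
    rfl
  have hFx : ∀ x, F x = (μ (Set.Iic x)).toReal := by
    intro x; rw [hF i0 x, hμIic i0 x]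
  have hpoint : ∀ x : ℝ, μ {x} = 0 := by
    intro x
    rw [hμdef, Measure.map_apply (hmeas i0) (measurableSet_singleton x)]
    exact hcont i0 x
  have keyInt := wds_keyInt μ F hFx hpoint (by
    intro m hm x hx
    rw [hμdef]
    exact hint i0 m hm x hx)
  -- joint law is the product measure
  have hjointmeas : Measurable (fun ω i => S i ω) := measurable_pi_lambda _ hmeas
  have hjoint : Measure.map (fun ω i => S i ω) P = (Measure.pi fun _ : Fin n => μ) := by
    refine (Measure.pi_eq ?_).symm
    intro s hs
    rw [Measure.map_apply hjointmeas (MeasurableSet.univ_pi hs)]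
    have hpre : (fun ω i => S i ω) ⁻¹' (Set.pi Set.univ s) = ⋂ i ∈ Finset.univ, S i ⁻¹' (s i) := by
      ext ω; simp [Set.mem_pi]
    rw [hpre, hindep.measure_inter_preimage_eq_mul Finset.univ (fun i _ => hs i)]
    refine Finset.prod_congr rfl fun i _ => ?_
    rw [← Measure.map_apply (hmeas i) (hs i), hmapS i]
  -- combinatorial setup
  set C : Fin (k+1) → Finset (Fin n) := fun l => (Finset.Iic l).biUnion fun j => D (v j)
    with hCdef
  have hCmono : ∀ {a b : Fin (k+1)}, a ≤ b → C a ⊆ C b := fun {a b} hab =>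
    Finset.biUnion_subset_biUnion_of_subset_left _ (Finset.Iic_subset_Iic.mpr hab)
  have hDsubC : ∀ l, D (v l) ⊆ C l := fun l =>
    Finset.subset_biUnion_of_mem (fun j => D (v j)) (Finset.mem_Iic.mpr (le_refl l))
  have hvnotC : ∀ l, v l ∉ C l := by
    intro l
    induction l using Fin.lastCases with
    | last => exact hlast
    | cast l => exact (hnest l).2
  have hvmemC : ∀ {a b : Fin (k+1)}, a < b → v a ∈ C b := by
    intro a b hab
    have ha : a ≠ Fin.last k := by
      intro h; subst h; exact absurd (lt_of_lt_of_le hab (Fin.le_last b)) (lt_irrefl _)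
    obtain ⟨a', rfl⟩ := Fin.exists_castSucc_eq.mpr ha
    have hsucc : a'.succ ≤ b := Fin.castSucc_lt_iff_succ_le.mp hab
    exact Finset.mem_biUnion.mpr ⟨a'.succ, Finset.mem_Iic.mpr hsucc, (hnest a').1⟩
  set W : Fin (k+1) → Finset (Fin n) := fun l => insert (v l) (C l) with hWdef
  have hWcard : ∀ l, (W l).card = (C l).card + 1 := fun l =>
    Finset.card_insert_of_notMem (hvnotC l)
  -- events
  set Inner : Fin (k+1) → Set (Fin n → ℝ) :=
    fun l => {y | ∀ j, j ≤ l → ∀ u ∈ C j, y u < y (v j)} with hInnerdef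
  have hInnerMeas : ∀ l, MeasurableSet (Inner l) := by
    intro l
    have : Inner l = ⋂ j, ⋂ (_ : j ≤ l), ⋂ u, ⋂ (_ : u ∈ C j), {y : Fin n → ℝ | y u < y (v j)} := by
      ext y; simp [hInnerdef]
    rw [this]
    exact MeasurableSet.iInter fun j => MeasurableSet.iInter fun _ =>
      MeasurableSet.iInter fun u => MeasurableSet.iInter fun _ =>
        measurableSet_lt (measurable_pi_apply u) (measurable_pi_apply (v j))
  have hupdInner : ∀ (l : Fin (k+1)) (w : Fin n), w ∉ W l → ∀ (y : Fin n → ℝ) (t' : ℝ),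
      (Function.update y w t' ∈ Inner l ↔ y ∈ Inner l) := by
    intro l w hw
    have hwv : ∀ j, j ≤ l → v j ≠ w := by
      intro j hj he
      rcases eq_or_lt_of_le hj with h | h
      · exact hw (he ▸ (h ▸ Finset.mem_insert_self (v l) (C l)))
      · exact hw (Finset.mem_insert_of_mem (he ▸ hvmemC h))
    have hwu : ∀ j, j ≤ l → ∀ u ∈ C j, u ≠ w := by
      intro j hj u hu he
      exact hw (Finset.mem_insert_of_mem (he ▸ hCmono hj hu))
    have dir : ∀ (y : Fin n → ℝ) (t' : ℝ), y ∈ Inner l → Function.update y w t' ∈ Inner l := by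
      intro y t' h j hj u hu
      rw [Function.update_of_ne (hwu j hj u hu), Function.update_of_ne (hwv j hj)]
      exact h j hj u hu
    intro y t'
    constructor
    · intro h
      have h2 := dir _ (y w) h
      rwa [Function.update_idem, Function.update_eq_self] at h2
    · exact dir y t'
  have hmain : ∀ (l : Fin (k+1)) (t : ℝ),
      (Measure.pi fun _ : Fin n => μ) (Inner l ∩ {y | y (v l) < t})
        = (μ (Set.Iio t)) ^ ((C l).card + 1)
            * ∏ j ∈ Finset.Iic l, (((C j).card : ℝ≥0∞) + 1)⁻¹ := by
    intro l
    induction l using Fin.induction with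
    | zero =>
      intro t
      have hA : MeasurableSet (Inner 0 ∩ {y : Fin n → ℝ | y (v 0) < t}) :=
        (hInnerMeas 0).inter (measurableSet_lt (measurable_pi_apply _) measurable_const)
      rw [wds_peel_set (v 0) _ hA]
      have hslice : ∀ u : ℝ, (Measure.pi fun _ : Fin n => μ)
          {y | Function.update y (v 0) u ∈ Inner 0 ∩ {y | y (v 0) < t}}
          = (Set.Iio t).indicator (fun u => (μ (Set.Iio u)) ^ (C 0).card) u := by
        intro u
        have hset : {y : Fin n → ℝ | Function.update y (v 0) u ∈ Inner 0 ∩ {y | y (v 0) < t}}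
            = if u < t then (Set.univ ∩ {y : Fin n → ℝ | ∀ w ∈ C 0, y w < u}) else ∅ := by
          ext y
          by_cases hu : u < t
          · simp only [if_pos hu, Set.mem_setOf_eq, Set.mem_inter_iff, Set.mem_univ, true_and,
              hInnerdef, Function.update_self]
            constructor
            · intro h w hw
              have h2 := h.1 0 le_rfl w hw
              rwa [Function.update_of_ne (by rintro rfl; exact hvnotC 0 hw),
                Function.update_self] at h2
            · intro h
              refine ⟨?_, hu⟩
              intro j hj w hw
              have hj0 : j = 0 := Fin.le_zero_iff.mp hj
              subst hj0
              rw [Function.update_of_ne (by rintro rfl; exact hvnotC 0 hw), Function.update_self]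
              exact h w hw
          · simp only [if_neg hu, Set.mem_setOf_eq, Set.mem_empty_iff_false, iff_false,
              Set.mem_inter_iff, not_and]
            intro _
            simpa [Function.update_self] using hu
        rw [hset]
        by_cases hu : u < t
        · rw [if_pos hu, wds_strip_block Set.univ MeasurableSet.univ (C 0)
            (fun w _ y t' => Iff.rfl) u]
          simp [Set.indicator_apply, hu]
        · rw [if_neg hu]
          simp [Set.indicator_apply, hu]
      simp_rw [hslice]
      rw [lintegral_indicator measurableSet_Iio _]
      have hki := keyInt ((C 0).card + 1) (Nat.le_add_left 1 _) t
      rw [Nat.add_sub_cancel] at hki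
      rw [hki]
      have hIic0 : Finset.Iic (0 : Fin (k+1)) = {0} := by
        ext j; simp [Finset.mem_Iic, Fin.le_zero_iff]
      rw [hIic0, Finset.prod_singleton, div_eq_mul_inv, Nat.cast_add, Nat.cast_one]
    | succ l ih =>
      intro t
      have hprevlt : l.castSucc < l.succ := Fin.castSucc_lt_succ
      have hA : MeasurableSet (Inner l.succ ∩ {y : Fin n → ℝ | y (v l.succ) < t}) :=
        (hInnerMeas _).inter (measurableSet_lt (measurable_pi_apply _) measurable_const)
      rw [wds_peel_set (v l.succ) _ hA]
      have hWsub : W l.castSucc ⊆ C l.succ := by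
        intro w hw
        rcases Finset.mem_insert.mp hw with h | h
        · exact h ▸ hvmemC hprevlt
        · exact hCmono hprevlt.le h
      have hgcard : (C l.succ \ W l.castSucc).card + ((C l.castSucc).card + 1)
          = (C l.succ).card := by
        rw [← hWcard l.castSucc]
        exact Finset.card_sdiff_add_card_eq_card hWsub
      have hAprev : ∀ u : ℝ,
          MeasurableSet (Inner l.castSucc ∩ {y : Fin n → ℝ | y (v l.castSucc) < u}) :=
        fun u => (hInnerMeas _).inter (measurableSet_lt (measurable_pi_apply _) measurable_const)
      have hne_u : ∀ {j : Fin (k+1)}, j ≤ l.succ → ∀ {w : Fin n}, w ∈ C j → w ≠ v l.succ := by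
        intro j hj w hw he
        exact hvnotC l.succ (he ▸ hCmono hj hw)
      have hne_v : ∀ {j : Fin (k+1)}, j ≤ l.castSucc → v j ≠ v l.succ := by
        intro j hj he
        have h2 := hmono.injective he
        rw [h2] at hj
        exact absurd hj (not_le.mpr hprevlt)
      have hslice : ∀ u : ℝ, (Measure.pi fun _ : Fin n => μ)
          {y | Function.update y (v l.succ) u ∈ Inner l.succ ∩ {y | y (v l.succ) < t}}
          = (Set.Iio t).indicator
              (fun u => (μ (Set.Iio u)) ^ ((C l.succ).card) *
                ∏ j ∈ Finset.Iic l.castSucc, (((C j).card : ℝ≥0∞) + 1)⁻¹) u := by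
        intro u
        have hset : {y : Fin n → ℝ | Function.update y (v l.succ) u
              ∈ Inner l.succ ∩ {y | y (v l.succ) < t}}
            = if u < t then ((Inner l.castSucc ∩ {y : Fin n → ℝ | y (v l.castSucc) < u})
                ∩ {y : Fin n → ℝ | ∀ w ∈ C l.succ \ W l.castSucc, y w < u}) else ∅ := by
          ext y
          by_cases hu : u < t
          · rw [if_pos hu]
            simp only [Set.mem_setOf_eq, Set.mem_inter_iff, Function.update_self]
            constructor
            · rintro ⟨h1, -⟩
              have hprev : y ∈ Inner l.castSucc := by
                intro j hj w hw
                have h2 := h1 j (hj.trans hprevlt.le) w hw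
                rwa [Function.update_of_ne (hne_u (hj.trans hprevlt.le) hw),
                  Function.update_of_ne (hne_v hj)] at h2
              have hCbound : ∀ w ∈ C l.succ, y w < u := by
                intro w hw
                have h2 := h1 l.succ le_rfl w hw
                rwa [Function.update_of_ne (hne_u le_rfl hw), Function.update_self] at h2
              exact ⟨⟨hprev, hCbound _ (hvmemC hprevlt)⟩,
                fun w hw => hCbound w (Finset.mem_sdiff.mp hw).1⟩
            · rintro ⟨⟨h1, h2⟩, h3⟩
              refine ⟨?_, hu⟩
              intro j hj w hw
              rcases eq_or_lt_of_le hj with heq | hlt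
              · subst heq
                rw [Function.update_of_ne (hne_u le_rfl hw), Function.update_self]
                by_cases hwW : w ∈ W l.castSucc
                · rcases Finset.mem_insert.mp hwW with hwv | hwC
                  · exact hwv ▸ h2
                  · exact lt_trans (h1 l.castSucc le_rfl w hwC) h2
                · exact h3 w (Finset.mem_sdiff.mpr ⟨hw, hwW⟩)
              · have hj' : j ≤ l.castSucc := Fin.le_castSucc_iff.mpr hlt
                rw [Function.update_of_ne (hne_u hj hw), Function.update_of_ne (hne_v hj')]
                exact h1 j hj' w hw
          · rw [if_neg hu]
            simp only [Set.mem_setOf_eq, Set.mem_inter_iff, Function.update_self,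
              Set.mem_empty_iff_false, iff_false, not_and]
            exact fun _ => hu
        rw [hset]
        by_cases hu : u < t
        · rw [if_pos hu]
          have hGA : ∀ w ∈ C l.succ \ W l.castSucc, ∀ (y : Fin n → ℝ) (t' : ℝ),
              Function.update y w t'
                ∈ (Inner l.castSucc ∩ {y : Fin n → ℝ | y (v l.castSucc) < u})
              ↔ y ∈ (Inner l.castSucc ∩ {y : Fin n → ℝ | y (v l.castSucc) < u}) := by
            intro w hw y t'
            have hwW : w ∉ W l.castSucc := (Finset.mem_sdiff.mp hw).2
            refine and_congr (hupdInner _ w hwW y t') ?_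
            rw [Set.mem_setOf_eq, Set.mem_setOf_eq,
              Function.update_of_ne (show v l.castSucc ≠ w from
                fun he => hwW (he ▸ Finset.mem_insert_self _ _))]
          rw [wds_strip_block _ (hAprev u) _ hGA u, ih u, Set.indicator_of_mem (Set.mem_Iio.mpr hu),
            mul_right_comm, ← pow_add]
          have hexp : (C l.castSucc).card + 1 + (C l.succ \ W l.castSucc).card
              = (C l.succ).card := by omega
          rw [hexp]
        · rw [if_neg hu]
          simp [Set.indicator_apply, hu]
      simp_rw [hslice]
      rw [lintegral_indicator measurableSet_Iio _]
      have hProdne : (∏ j ∈ Finset.Iic l.castSucc, (((C j).card : ℝ≥0∞) + 1)⁻¹) ≠ ⊤ := by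
        refine (lt_of_le_of_lt (Finset.prod_le_one ?_ ?_) ENNReal.one_lt_top).ne
        · intro j _; exact zero_le
        · intro j _
          exact ENNReal.inv_le_one.mpr (le_add_self.trans (le_refl _))
      rw [lintegral_mul_const' _ _ hProdne]
      have hki := keyInt ((C l.succ).card + 1) (Nat.le_add_left 1 _) t
      rw [Nat.add_sub_cancel] at hki
      rw [hki]
      have hnotmem : l.succ ∉ Finset.Iic l.castSucc := by
        simp only [Finset.mem_Iic]
        exact not_le.mpr hprevlt
      have hIicSucc : Finset.Iic l.succ = insert l.succ (Finset.Iic l.castSucc) := by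
        ext j
        simp only [Finset.mem_Iic, Finset.mem_insert]
        constructor
        · intro h
          rcases eq_or_lt_of_le h with h | h
          · exact Or.inl h
          · exact Or.inr (Fin.le_castSucc_iff.mpr h)
        · rintro (rfl | h)
          · exact le_rfl
          · exact h.trans hprevlt.le
      rw [hIicSucc, Finset.prod_insert hnotmem, div_eq_mul_inv, Nat.cast_add, Nat.cast_one,
        mul_assoc]
  set E' : Set (Fin n → ℝ) := {y | ∀ l : Fin (k+1), ∀ u ∈ D (v l), y u < y (v l)} with hE'def
  have hE'meas : MeasurableSet E' := by
    have : E' = ⋂ l : Fin (k+1), ⋂ u, ⋂ (_ : u ∈ D (v l)), {y : Fin n → ℝ | y u < y (v l)} := by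
      ext y; simp [hE'def]
    rw [this]
    exact MeasurableSet.iInter fun l => MeasurableSet.iInter fun u =>
      MeasurableSet.iInter fun _ =>
        measurableSet_lt (measurable_pi_apply _) (measurable_pi_apply _)
  have hPE : P {ω | ∀ l : Fin (k + 1), ∀ u ∈ D (v l), S u ω < S (v l) ω}
      = (Measure.pi fun _ : Fin n => μ) E' := by
    rw [← hjoint, Measure.map_apply hjointmeas hE'meas]
    rfl
  have hE'Inner : E' = Inner (Fin.last k) := by
    ext y
    simp only [hE'def, hInnerdef, Set.mem_setOf_eq]
    constructor
    · intro h
      have hchain : ∀ b a : Fin (k+1), a ≤ b → y (v a) ≤ y (v b) := by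
        intro b
        induction b using Fin.induction with
        | zero => intro a ha; rw [Fin.le_zero_iff.mp ha]
        | succ b ihb =>
          intro a ha
          rcases eq_or_lt_of_le ha with heq | hlt
          · rw [heq]
          · have ha' : a ≤ b.castSucc := Fin.le_castSucc_iff.mpr hlt
            exact (ihb a ha').trans (le_of_lt (h b.succ (v b.castSucc) (hnest b).1))
      intro j _ u hu
      obtain ⟨j', hj', hu'⟩ := Finset.mem_biUnion.mp hu
      exact lt_of_lt_of_le (h j' u hu') (hchain j j' (Finset.mem_Iic.mp hj'))
    · intro h l u hu
      exact h l (Fin.le_last l) u (hDsubC l hu)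
  rw [hPE, hE'Inner]
  have hmono1 : Monotone (fun m : ℕ =>
      Inner (Fin.last k) ∩ {y : Fin n → ℝ | y (v (Fin.last k)) < (m:ℝ)}) := by
    intro a b hab
    have hab' : (a:ℝ) ≤ b := by exact_mod_cast hab
    rintro y ⟨h1, h2⟩
    exact ⟨h1, lt_of_lt_of_le h2 hab'⟩
  have hUnion : ⋃ m : ℕ, (Inner (Fin.last k) ∩ {y : Fin n → ℝ | y (v (Fin.last k)) < (m:ℝ)})
      = Inner (Fin.last k) := by
    ext y
    simp only [Set.mem_iUnion, Set.mem_inter_iff, Set.mem_setOf_eq]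
    constructor
    · rintro ⟨m, hm, -⟩; exact hm
    · intro hy
      obtain ⟨m, hm⟩ := exists_nat_gt (y (v (Fin.last k)))
      exact ⟨m, hy, hm⟩
  have hlim1 : Filter.Tendsto (fun m : ℕ => (Measure.pi fun _ : Fin n => μ)
      (Inner (Fin.last k) ∩ {y | y (v (Fin.last k)) < (m:ℝ)})) Filter.atTop
      (nhds ((Measure.pi fun _ : Fin n => μ) (Inner (Fin.last k)))) := by
    have h2 := tendsto_measure_iUnion_atTop (μ := Measure.pi fun _ : Fin n => μ) hmono1
    rwa [hUnion] at h2
  have hGlim : Filter.Tendsto (fun m : ℕ => μ (Set.Iio (m:ℝ))) Filter.atTop (nhds 1) := by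
    have hm2 : Monotone (fun m : ℕ => Set.Iio (m:ℝ)) := fun a b hab =>
      Set.Iio_subset_Iio (by exact_mod_cast hab)
    have h2 := tendsto_measure_iUnion_atTop (μ := μ) hm2
    have hU : ⋃ m : ℕ, Set.Iio (m:ℝ) = Set.univ := by
      ext x
      simp only [Set.mem_iUnion, Set.mem_Iio, Set.mem_univ, iff_true]
      exact exists_nat_gt x
    rwa [hU, measure_univ] at h2
  have hlim2 : Filter.Tendsto (fun m : ℕ => (Measure.pi fun _ : Fin n => μ)
      (Inner (Fin.last k) ∩ {y | y (v (Fin.last k)) < (m:ℝ)})) Filter.atTop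
      (nhds (∏ j ∈ Finset.Iic (Fin.last k), (((C j).card : ℝ≥0∞) + 1)⁻¹)) := by
    have h4 : Filter.Tendsto (fun m : ℕ => μ (Set.Iio (m:ℝ)) ^ ((C (Fin.last k)).card + 1)
        * ∏ j ∈ Finset.Iic (Fin.last k), (((C j).card : ℝ≥0∞) + 1)⁻¹) Filter.atTop
        (nhds ((1:ℝ≥0∞) ^ ((C (Fin.last k)).card + 1)
          * ∏ j ∈ Finset.Iic (Fin.last k), (((C j).card : ℝ≥0∞) + 1)⁻¹)) :=
      ENNReal.Tendsto.mul_const (ENNReal.Tendsto.pow hGlim)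
        (Or.inl (by rw [one_pow]; exact one_ne_zero))
    rw [one_pow, one_mul] at h4
    exact Filter.Tendsto.congr (fun m => (hmain (Fin.last k) (m:ℝ)).symm) h4
  rw [tendsto_nhds_unique hlim1 hlim2]
  have hIicLast : Finset.Iic (Fin.last k) = Finset.univ := by
    ext j; simp [Finset.mem_Iic, Fin.le_last]
  rw [hIicLast]
  refine Finset.prod_congr rfl fun j _ => ?_
  rw [one_div]
end

section
/- For any finite simple graph H with m edges and maximum degree Δ, the maximum average degree satisfies h_av(H) ≤ (2√2 + 2)·(mΔ)^{1/3}. -/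
/-- For a finite simple graph `H` with `m` edges and maximum degree `Δ`, the maximum average
degree satisfies `h_av(H) ≤ (2√2 + 2) (mΔ)^{1/3}`. -/
theorem max_avg_degree_le_cuberoot
    {V : Type*} [Fintype V] (H : SimpleGraph V) [DecidableRel H.Adj] (hav : ℝ)
    (hhav : IsGreatest
      {d : ℝ | ∃ Γ : H.Subgraph, Γ.verts.Nonempty ∧
        d = 2 * (Γ.edgeSet.ncard : ℝ) / (Γ.verts.ncard : ℝ)} hav) :
    hav ≤ (2 * Real.sqrt 2 + 2) *
      ((H.edgeSet.ncard : ℝ) * (H.maxDegree : ℝ)) ^ ((1 : ℝ) / 3) := by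
  classical
  obtain ⟨⟨Γ, hne, hd⟩, -⟩ := hhav
  letI : DecidableEq V := Classical.decEq V
  letI : DecidableRel Γ.Adj := Classical.decRel _
  letI : DecidableRel Γ.coe.Adj := Classical.decRel _
  letI : Fintype ↥Γ.verts := Set.Finite.fintype (Set.toFinite _)
  set n := Γ.verts.ncard with hn
  set e := Γ.edgeSet.ncard with he
  set m := H.edgeSet.ncard with hm
  set Δ := H.maxDegree with hΔ
  have hnpos : 0 < n := Set.Nonempty.ncard_pos (Set.toFinite _) hne
  -- identify e with the edge count of the coerced graph
  have hcard_verts : Fintype.card ↥Γ.verts = n := by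
    rw [hn, Set.ncard_eq_toFinset_card']
    simp [Set.toFinset_card]
  have hcard_edges : Γ.coe.edgeFinset.card = e := by
    rw [he, ← Γ.image_coe_edgeSet_coe,
      Set.ncard_image_of_injective _ (Sym2.map.injective Subtype.val_injective),
      Set.ncard_eq_toFinset_card', SimpleGraph.edgeFinset]
  -- bound 1 : 2e ≤ n^2
  have h1 : 2 * e ≤ n * n := by
    have h := Γ.coe.card_edgeFinset_le_card_choose_two
    rw [hcard_edges, hcard_verts, Nat.choose_two_right] at h
    have h' : 2 * e ≤ n * (n - 1) := by omega
    exact h'.trans (Nat.mul_le_mul_left _ (Nat.sub_le _ _))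
  -- bound 2 : 2e ≤ n * Δ
  have h2 : 2 * e ≤ n * Δ := by
    have hsum : (∑ v : ↥Γ.verts, Γ.coe.degree v) = 2 * e := by
      rw [← hcard_edges]
      convert Γ.coe.sum_degrees_eq_twice_card_edges using 2
      congr!
    have hdeg : ∀ v : ↥Γ.verts, Γ.coe.degree v ≤ Δ := by
      intro v
      calc Γ.coe.degree v = Γ.degree v := Γ.coe_degree v
      _ ≤ H.degree v := Γ.degree_le v
      _ ≤ Δ := H.degree_le_maxDegree v
    rw [← hsum]
    refine (Finset.sum_le_card_nsmul _ _ Δ fun v _ => hdeg v).trans ?_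
    rw [Finset.card_univ, hcard_verts, smul_eq_mul]
  -- bound 3 : e ≤ m
  have h3 : e ≤ m := Set.ncard_le_ncard Γ.edgeSet_subset (Set.toFinite _)
  -- pass to reals
  have hNpos : (0:ℝ) < n := by exact_mod_cast hnpos
  have hE : (0:ℝ) ≤ (e:ℝ) := by positivity
  have hhav0 : 0 ≤ hav := by
    rw [hd]; positivity
  have hcube : hav ^ (3:ℕ) ≤ 2 * (m * Δ) := by
    rw [hd, div_pow]
    rw [div_le_iff₀ (by positivity)]
    have h1' : 2 * (e:ℝ) ≤ (n:ℝ) * n := by exact_mod_cast h1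
    have h2' : 2 * (e:ℝ) ≤ (n:ℝ) * Δ := by exact_mod_cast h2
    have h3' : 2 * (e:ℝ) ≤ 2 * m := by
      have : (e:ℝ) ≤ m := by exact_mod_cast h3
      linarith
    calc (2 * (e:ℝ)) ^ (3:ℕ) = (2*(e:ℝ)) * ((2*(e:ℝ)) * (2*(e:ℝ))) := by ring
    _ ≤ ((n:ℝ)*n) * (((n:ℝ)*Δ) * (2*(m:ℝ))) := by
        apply mul_le_mul h1' _ (by positivity) (by positivity)
        apply mul_le_mul h2' h3' (by positivity) (by positivity)
    _ = 2 * ((m:ℝ) * Δ) * (n:ℝ)^(3:ℕ) := by ring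
  have hMD : (0:ℝ) ≤ (m:ℝ) * Δ := by positivity
  have key : hav ≤ (2 * ((m:ℝ) * Δ)) ^ ((1:ℝ)/3) := by
    have : hav = (hav ^ (3:ℕ)) ^ ((1:ℝ)/3) := by
      rw [← Real.rpow_natCast hav 3, ← Real.rpow_mul hhav0]
      norm_num
    rw [this]
    exact Real.rpow_le_rpow (by positivity) hcube (by norm_num)
  calc hav ≤ (2 * ((m:ℝ) * Δ)) ^ ((1:ℝ)/3) := key
  _ = 2 ^ ((1:ℝ)/3) * ((m:ℝ) * Δ) ^ ((1:ℝ)/3) := Real.mul_rpow (by norm_num) hMD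
  _ ≤ (2 * Real.sqrt 2 + 2) * ((m:ℝ) * Δ) ^ ((1:ℝ)/3) := by
      apply mul_le_mul_of_nonneg_right _ (Real.rpow_nonneg hMD _)
      have h2le : (2:ℝ) ^ ((1:ℝ)/3) ≤ 2 ^ (1:ℝ) := by
        apply Real.rpow_le_rpow_of_exponent_le (by norm_num) (by norm_num)
      rw [Real.rpow_one] at h2le
      have : (0:ℝ) ≤ Real.sqrt 2 := Real.sqrt_nonneg 2
      linarith
end

section
/- Let G be an inhomogeneous random graph on n vertices where each potential edge (u,v) is present independently with probability p(u,v). Suppose for every vertex set V of size l ≥ n^α (log n)³ the averaged edge probability (1/C(l,2)) Σ_{u,v ∈ V} p(u,v) is at least C₁/n^{β_low}, with 0 ≤ β_low ≤ α. Then there is a constant D₂ > 0 such that for all large n, P(χ(G) ≥ n^{1−α}/(log n)³) ≥ 1 − exp(−D₂ n^{2α−β_low}(log n)^6). -/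
open MeasureTheory ProbabilityTheory Finset Filter Real
open scoped ENNReal

lemma sum_offDiag_sym2 {V : Type*} [DecidableEq V] (S : Finset V) (p : V → V → ℝ)
    (hsym : ∀ u v, p u v = p v u) (hdiag : ∀ u, p u u = 0) :
    ∑ u ∈ S, ∑ v ∈ S, p u v
      = 2 * ∑ e ∈ S.offDiag.image (fun x => s(x.1, x.2)),
            Sym2.lift ⟨p, fun a b => hsym a b⟩ e := by
  have h1 : ∑ e ∈ S.offDiag.image (fun x => s(x.1, x.2)),
      Sym2.lift ⟨p, fun a b => hsym a b⟩ e
      = ∑ x ∈ S.offDiag, p x.1 x.2 / 2 := by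
    refine Finset.sum_image' _ ?_
    intro c hc
    have hc' := Finset.mem_offDiag.1 hc
    have hfil : (S.offDiag.filter fun x => s(x.1, x.2) = s(c.1, c.2))
        = {(c.1, c.2), (c.2, c.1)} := by
      ext x
      simp only [Finset.mem_filter, Finset.mem_offDiag, Finset.mem_insert,
        Finset.mem_singleton, Sym2.eq_iff, Prod.ext_iff]
      constructor
      · rintro ⟨⟨_, _, _⟩, (⟨h1, h2⟩ | ⟨h1, h2⟩)⟩
        · exact Or.inl ⟨h1, h2⟩
        · exact Or.inr ⟨h1, h2⟩
      · rintro (⟨h1, h2⟩ | ⟨h1, h2⟩)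
        · exact ⟨⟨h1 ▸ hc'.1, h2 ▸ hc'.2.1, by rw [h1, h2]; exact hc'.2.2⟩, Or.inl ⟨h1, h2⟩⟩
        · exact ⟨⟨h1 ▸ hc'.2.1, h2 ▸ hc'.1, by rw [h1, h2]; exact fun h => hc'.2.2 h.symm⟩,
            Or.inr ⟨h1, h2⟩⟩
    rw [hfil, Finset.sum_pair (by
      intro h
      exact hc'.2.2 (congrArg Prod.fst h))]
    simp only [Sym2.lift_mk]
    rw [hsym c.2 c.1]; ring
  have h2 : ∑ u ∈ S, ∑ v ∈ S, p u v = ∑ x ∈ S.offDiag, p x.1 x.2 := by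
    rw [← Finset.sum_product']
    have hoff : S.offDiag = (S ×ˢ S).filter (fun x => x.1 ≠ x.2) := by
      ext x; simp [Finset.mem_offDiag, and_assoc]
    rw [hoff, ← Finset.sum_filter_add_sum_filter_not (S ×ˢ S) (fun x => x.1 ≠ x.2)]
    have hz : ∑ x ∈ (S ×ˢ S).filter (fun x => ¬ x.1 ≠ x.2), p x.1 x.2 = 0 := by
      refine Finset.sum_eq_zero fun x hx => ?_
      have hxx := (Finset.mem_filter.1 hx).2
      rw [not_not] at hxx
      rw [hxx]; exact hdiag _
    rw [hz, add_zero]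
  rw [h2, h1, ← Finset.sum_div]; ring

lemma stable_prob_bound {n : ℕ} {Ω : Type} [MeasurableSpace Ω] (P : Measure Ω)
    [IsProbabilityMeasure P]
    (X : Sym2 (Fin n) → Ω → Bool) (p : Fin n → Fin n → ℝ) (hX : ∀ e, Measurable (X e))
    (hind : iIndepFun X P)
    (hsym : ∀ u v, p u v = p v u) (hbd : ∀ u v, 0 ≤ p u v ∧ p u v ≤ 1)
    (hp : ∀ u v, u ≠ v → P {ω | X s(u, v) ω = true} = ENNReal.ofReal (p u v))
    (S : Finset (Fin n)) :
    P (⋂ e ∈ S.offDiag.image (fun x => s(x.1, x.2)), {ω | X e ω = false})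
      ≤ ENNReal.ofReal (Real.exp (-(∑ e ∈ S.offDiag.image (fun x => s(x.1, x.2)),
          Sym2.lift ⟨p, fun a b => hsym a b⟩ e))) := by
  classical
  set pe : Sym2 (Fin n) → ℝ := Sym2.lift ⟨p, fun a b => hsym a b⟩ with hpe
  set ES := S.offDiag.image (fun x => s(x.1, x.2)) with hES
  have hrange : ∀ e ∈ ES, 0 ≤ pe e ∧ pe e ≤ 1 ∧
      P {ω | X e ω = false} = ENNReal.ofReal (1 - pe e) := by
    intro e he
    obtain ⟨x, hx, rfl⟩ := Finset.mem_image.1 he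
    have hne : x.1 ≠ x.2 := (Finset.mem_offDiag.1 hx).2.2
    have hlift : pe s(x.1, x.2) = p x.1 x.2 := Sym2.lift_mk _ _ _
    refine ⟨hlift ▸ (hbd x.1 x.2).1, hlift ▸ (hbd x.1 x.2).2, ?_⟩
    have hset : {ω | X s(x.1, x.2) ω = false} = {ω | X s(x.1, x.2) ω = true}ᶜ := by
      ext ω; simp
    have hms : MeasurableSet {ω | X s(x.1, x.2) ω = true} :=
      (hX _) (measurableSet_singleton true)
    rw [hset, prob_compl_eq_one_sub hms,
      hp x.1 x.2 hne, hlift, ← ENNReal.ofReal_one,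
      ← ENNReal.ofReal_sub _ (hbd x.1 x.2).1]
  have hmeas : ∀ e ∈ ES,
      MeasurableSet[MeasurableSpace.comap (X e) inferInstance] {ω | X e ω = false} :=
    fun e _ => ⟨{false}, trivial, rfl⟩
  rw [hind.meas_biInter hmeas]
  have hprod : ∏ e ∈ ES, P {ω | X e ω = false}
      = ENNReal.ofReal (∏ e ∈ ES, (1 - pe e)) := by
    rw [ENNReal.ofReal_prod_of_nonneg (fun e he => by linarith [(hrange e he).2.1])]
    exact Finset.prod_congr rfl fun e he => (hrange e he).2.2
  rw [hprod]
  apply ENNReal.ofReal_le_ofReal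
  calc ∏ e ∈ ES, (1 - pe e) ≤ ∏ e ∈ ES, Real.exp (-pe e) := by
        refine Finset.prod_le_prod (fun e he => by linarith [(hrange e he).2.1]) ?_
        intro e he
        linarith [Real.add_one_le_exp (-pe e)]
    _ = Real.exp (-∑ e ∈ ES, pe e) := by
        rw [← Real.exp_sum, Finset.sum_neg_distrib]

lemma exists_stable_of_colorable {n k s : ℕ} (G : SimpleGraph (Fin n))
    (hcol : G.Colorable k) (hks : k * (s - 1) < n) (hs1 : 1 ≤ s) :
    ∃ S : Finset (Fin n), S.card = s ∧ ∀ u ∈ S, ∀ v ∈ S, ¬ G.Adj u v := by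
  classical
  obtain ⟨co⟩ := hcol
  have hpig := Finset.exists_lt_card_fiber_of_mul_lt_card_of_maps_to
    (s := (univ : Finset (Fin n))) (t := (univ : Finset (Fin k)))
    (f := fun v => co v) (fun a _ => mem_univ _)
    (by simpa using hks)
  obtain ⟨y, -, hy⟩ := hpig
  have hcard : s ≤ #{x ∈ univ | (fun v => co v) x = y} := by beta_reduce; omega
  obtain ⟨S, hSsub, hScard⟩ := Finset.exists_subset_card_eq hcard
  refine ⟨S, hScard, fun u hu v hv hadj => ?_⟩
  have hu' := (Finset.mem_filter.1 (hSsub hu)).2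
  have hv' := (Finset.mem_filter.1 (hSsub hv)).2
  exact co.valid hadj (hu'.trans hv'.symm)

lemma tendsto_rpow_mul_log_pow (a : ℝ) (ha : 0 ≤ a) (k : ℕ) (hk : k ≠ 0) :
    Tendsto (fun n : ℕ => (n : ℝ) ^ a * Real.log n ^ k) atTop atTop := by
  have hlog : Tendsto (fun n : ℕ => Real.log n ^ k) atTop atTop :=
    (tendsto_pow_atTop hk).comp (Real.tendsto_log_atTop.comp tendsto_natCast_atTop_atTop)
  refine tendsto_atTop_mono' _ ?_ hlog
  filter_upwards [eventually_ge_atTop 1] with n hn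
  have hn1 : (1 : ℝ) ≤ (n : ℝ) := by exact_mod_cast hn
  have h1 : (1 : ℝ) ≤ (n : ℝ) ^ a := Real.one_le_rpow hn1 ha
  have h2 : (0 : ℝ) ≤ Real.log n ^ k := pow_nonneg (Real.log_nonneg hn1) k
  calc Real.log n ^ k = 1 * Real.log n ^ k := (one_mul _).symm
    _ ≤ (n : ℝ) ^ a * Real.log n ^ k := mul_le_mul_of_nonneg_right h1 h2
/-- Lower bound on the chromatic number of an inhomogeneous random graph: if all averaged
edge probabilities over vertex sets of size at least `n^α (log n)³` are at least
`C₁ / n^{β_low}` with `0 ≤ β_low ≤ α`, then there is `D₂ > 0` such that for all large `n`,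
`χ(G) ≥ n^{1-α} / (log n)³` with probability at least
`1 - exp(-D₂ n^{2α - β_low} (log n)⁶)`. -/
theorem chromatic_lower_bound_inhomogeneous
    (α βlow C₁ : ℝ) (hβ0 : 0 ≤ βlow) (hβα : βlow ≤ α) (hC₁ : 0 < C₁) :
    ∃ D₂ : ℝ, 0 < D₂ ∧ ∃ N : ℕ, ∀ n : ℕ, N ≤ n →
      ∀ (Ω : Type) (_ : MeasurableSpace Ω) (P : Measure Ω), IsProbabilityMeasure P →
      ∀ (X : Sym2 (Fin n) → Ω → Bool) (p : Fin n → Fin n → ℝ),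
      (∀ e, Measurable (X e)) →
      iIndepFun X P →
      (∀ u v, p u v = p v u) →
      (∀ u, p u u = 0) →
      (∀ u v, 0 ≤ p u v ∧ p u v ≤ 1) →
      (∀ u v, u ≠ v → P {ω | X s(u, v) ω = true} = ENNReal.ofReal (p u v)) →
      (∀ Vs : Finset (Fin n), (n : ℝ) ^ α * (Real.log n) ^ 3 ≤ (Vs.card : ℝ) →
        C₁ / (n : ℝ) ^ βlow ≤
          (∑ u ∈ Vs, ∑ v ∈ Vs, p u v) / (2 * (Vs.card.choose 2 : ℝ))) →
      1 - ENNReal.ofReal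
          (Real.exp (-D₂ * (n : ℝ) ^ (2 * α - βlow) * (Real.log n) ^ 6)) ≤
        P {ω | ENNReal.ofReal ((n : ℝ) ^ (1 - α) / (Real.log n) ^ 3) ≤
          ((SimpleGraph.fromRel (fun u v => X s(u, v) ω = true)).chromaticNumber :
            ℝ≥0∞)} := by
  classical
  have hα0 : 0 ≤ α := le_trans hβ0 hβα
  have hev : ∀ᶠ n : ℕ in atTop,
      3 ≤ n ∧ 2 ≤ (n : ℝ) ^ α * Real.log n ^ 3 ∧
        16 ≤ C₁ * ((n : ℝ) ^ (α - βlow) * Real.log n ^ 2) := by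
    have h1 := tendsto_rpow_mul_log_pow α hα0 3 (by norm_num)
    have h2 := (tendsto_rpow_mul_log_pow (α - βlow) (by linarith) 2
      (by norm_num)).const_mul_atTop hC₁
    filter_upwards [eventually_ge_atTop 3, h1.eventually_ge_atTop 2,
      h2.eventually_ge_atTop 16] with n ha hb hc using ⟨ha, hb, hc⟩
  obtain ⟨N, hN⟩ := eventually_atTop.1 hev
  refine ⟨C₁ / 8, by positivity, N, ?_⟩
  intro n hn Ω mΩ P hP X p hX hind hsym hdiag hbd hp havg
  obtain ⟨hn3, ht2, h16⟩ := hN n hn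
  set L : ℝ := Real.log n with hLdef
  have hn0 : (0 : ℝ) < n := by
    have : (3 : ℝ) ≤ (n : ℝ) := by exact_mod_cast hn3
    linarith
  have hn1 : (3 : ℝ) ≤ (n : ℝ) := by exact_mod_cast hn3
  have hL1 : 1 ≤ L := by
    rw [hLdef, Real.le_log_iff_exp_le hn0]
    have := Real.exp_one_lt_d9
    linarith
  have hL0 : 0 < L := by linarith
  set t : ℝ := (n : ℝ) ^ α * L ^ 3 with htdef
  have ht0 : 0 < t := by linarith
  set m : ℕ := ⌈t⌉₊ with hmdef
  have hts : t ≤ (m : ℝ) := Nat.le_ceil t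
  have hst : (m : ℝ) < t + 1 := Nat.ceil_lt_add_one ht0.le
  have hm2 : 2 ≤ m := by
    have h1t : (1 : ℝ) < t := by linarith
    have := Nat.lt_ceil.2 (by exact_mod_cast h1t : ((1 : ℕ) : ℝ) < t)
    omega
  set pe : Sym2 (Fin n) → ℝ := Sym2.lift ⟨p, fun a b => hsym a b⟩ with hpedef
  set Xq : ℝ := (n : ℝ) ^ (2 * α - βlow) * L ^ 6 with hXqdef
  have hnα : 0 < (n : ℝ) ^ α := Real.rpow_pos_of_pos hn0 α
  have hnβ : 0 < (n : ℝ) ^ βlow := Real.rpow_pos_of_pos hn0 βlow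
  have hnαβ : 0 < (n : ℝ) ^ (α - βlow) := Real.rpow_pos_of_pos hn0 (α - βlow)
  -- key rpow identities
  have idX : t ^ 2 / (n : ℝ) ^ βlow = Xq := by
    have e1 : (n : ℝ) ^ α * (n : ℝ) ^ α = (n : ℝ) ^ (2 * α) := by
      rw [← Real.rpow_add hn0]; ring_nf
    have e2 : (n : ℝ) ^ (2 * α) / (n : ℝ) ^ βlow = (n : ℝ) ^ (2 * α - βlow) := by
      rw [← Real.rpow_sub hn0]
    calc t ^ 2 / (n : ℝ) ^ βlow
        = ((n : ℝ) ^ α * (n : ℝ) ^ α) * L ^ 6 / (n : ℝ) ^ βlow := by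
          rw [htdef]; ring
      _ = (n : ℝ) ^ (2 * α) / (n : ℝ) ^ βlow * L ^ 6 := by rw [e1]; ring
      _ = Xq := by rw [e2, hXqdef]
  have idsplit : (n : ℝ) ^ (2 * α - βlow) = (n : ℝ) ^ (α - βlow) * (n : ℝ) ^ α := by
    rw [← Real.rpow_add hn0]; ring_nf
  -- numeric bound : m * L ≤ (C₁/8) * Xq
  have hnum : (m : ℝ) * L ≤ C₁ / 8 * Xq := by
    have hm2t : (m : ℝ) ≤ 2 * t := by linarith
    have hL4 : (0 : ℝ) < L ^ 4 := by positivity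
    have key : 16 * ((n : ℝ) ^ α * L ^ 4 / 8)
        ≤ C₁ * ((n : ℝ) ^ (α - βlow) * L ^ 2) * ((n : ℝ) ^ α * L ^ 4 / 8) := by
      apply mul_le_mul_of_nonneg_right h16 (by positivity)
    have hmL : (m : ℝ) * L ≤ 2 * ((n : ℝ) ^ α * L ^ 4) := by
      have : (m : ℝ) * L ≤ 2 * t * L := by
        apply mul_le_mul_of_nonneg_right hm2t hL0.le
      calc (m : ℝ) * L ≤ 2 * t * L := this
        _ = 2 * ((n : ℝ) ^ α * L ^ 4) := by rw [htdef]; ring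
    calc (m : ℝ) * L ≤ 2 * ((n : ℝ) ^ α * L ^ 4) := hmL
      _ = 16 * ((n : ℝ) ^ α * L ^ 4 / 8) := by ring
      _ ≤ C₁ * ((n : ℝ) ^ (α - βlow) * L ^ 2) * ((n : ℝ) ^ α * L ^ 4 / 8) := key
      _ = C₁ / 8 * Xq := by rw [hXqdef, idsplit]; ring
  -- choose bound : (C₁/4) * Xq ≤ (m.choose 2) * (C₁ / n^βlow)
  have hchoose : C₁ / 4 * Xq ≤ (m.choose 2 : ℝ) * (C₁ / (n : ℝ) ^ βlow) := by
    have hc2 : (m.choose 2 : ℝ) = (m : ℝ) * ((m : ℝ) - 1) / 2 := by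
      exact_mod_cast Nat.cast_choose_two (K := ℝ) m
    have hm1 : t / 2 ≤ (m : ℝ) - 1 := by linarith
    have hcq : t ^ 2 / 4 ≤ (m.choose 2 : ℝ) := by
      rw [hc2]
      nlinarith [ht0, hts]
    have hQ : 0 < C₁ / (n : ℝ) ^ βlow := by positivity
    calc C₁ / 4 * Xq = t ^ 2 / 4 * (C₁ / (n : ℝ) ^ βlow) := by
          rw [← idX]; field_simp
      _ ≤ (m.choose 2 : ℝ) * (C₁ / (n : ℝ) ^ βlow) :=
          mul_le_mul_of_nonneg_right hcq hQ.le
  -- the bad event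
  set T : Finset (Fin n) → Set Ω :=
    fun S => ⋂ e ∈ S.offDiag.image (fun x => s(x.1, x.2)), {ω | X e ω = false} with hTdef
  set B : Set Ω := ⋃ S ∈ Finset.powersetCard m (univ : Finset (Fin n)), T S with hBdef
  -- per-set bound
  have hperset : ∀ S ∈ Finset.powersetCard m (univ : Finset (Fin n)),
      P (T S) ≤ ENNReal.ofReal (Real.exp (-(C₁ / 4 * Xq))) := by
    intro S hS
    have hScard : S.card = m := (Finset.mem_powersetCard.1 hS).2
    have hsum : C₁ / 4 * Xq ≤ ∑ e ∈ S.offDiag.image (fun x => s(x.1, x.2)), pe e := by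
      have havgS := havg S (by rw [hScard]; exact hts)
      have hcpos : (0 : ℝ) < 2 * (S.card.choose 2 : ℝ) := by
        rw [hScard]
        have := Nat.choose_pos (show 2 ≤ m from hm2)
        positivity
      have hsum2 : C₁ / (n : ℝ) ^ βlow * (2 * (S.card.choose 2 : ℝ))
          ≤ ∑ u ∈ S, ∑ v ∈ S, p u v := by
        rw [← le_div_iff₀ hcpos]; exact havgS
      have hkey := sum_offDiag_sym2 S p hsym hdiag
      rw [hScard] at hsum2
      calc C₁ / 4 * Xq ≤ (m.choose 2 : ℝ) * (C₁ / (n : ℝ) ^ βlow) := hchoose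
        _ ≤ (∑ u ∈ S, ∑ v ∈ S, p u v) / 2 := by linarith
        _ = ∑ e ∈ S.offDiag.image (fun x => s(x.1, x.2)), pe e := by
            rw [hkey]; ring
    calc P (T S) ≤ ENNReal.ofReal
          (Real.exp (-(∑ e ∈ S.offDiag.image (fun x => s(x.1, x.2)), pe e))) :=
        stable_prob_bound P X p hX hind hsym hbd hp S
      _ ≤ ENNReal.ofReal (Real.exp (-(C₁ / 4 * Xq))) := by
          apply ENNReal.ofReal_le_ofReal
          apply Real.exp_le_exp.2
          linarith
  -- union bound
  have hB : P B ≤ ENNReal.ofReal (Real.exp (-(C₁ / 8 * Xq))) := by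
    calc P B ≤ ∑ S ∈ Finset.powersetCard m (univ : Finset (Fin n)), P (T S) :=
        measure_biUnion_finset_le _ _
      _ ≤ ∑ S ∈ Finset.powersetCard m (univ : Finset (Fin n)),
            ENNReal.ofReal (Real.exp (-(C₁ / 4 * Xq))) :=
        Finset.sum_le_sum hperset
      _ = (n.choose m : ℝ≥0∞) * ENNReal.ofReal (Real.exp (-(C₁ / 4 * Xq))) := by
          rw [Finset.sum_const, Finset.card_powersetCard, Finset.card_univ,
            Fintype.card_fin, nsmul_eq_mul]
      _ = ENNReal.ofReal ((n.choose m : ℝ) * Real.exp (-(C₁ / 4 * Xq))) := by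
          rw [ENNReal.ofReal_mul (by positivity), ENNReal.ofReal_natCast]
      _ ≤ ENNReal.ofReal (Real.exp (-(C₁ / 8 * Xq))) := by
          apply ENNReal.ofReal_le_ofReal
          have hcb : (n.choose m : ℝ) ≤ Real.exp ((m : ℝ) * L) := by
            have h1 : (n.choose m : ℝ) ≤ ((n : ℕ) : ℝ) ^ m := by
              exact_mod_cast Nat.choose_le_pow n m
            have h2 : Real.exp ((m : ℝ) * L) = (n : ℝ) ^ m := by
              rw [hLdef, Real.exp_nat_mul, Real.exp_log hn0]
            rw [h2]; exact h1
          calc (n.choose m : ℝ) * Real.exp (-(C₁ / 4 * Xq))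
              ≤ Real.exp ((m : ℝ) * L) * Real.exp (-(C₁ / 4 * Xq)) := by
                apply mul_le_mul_of_nonneg_right hcb (Real.exp_nonneg _)
            _ = Real.exp ((m : ℝ) * L - C₁ / 4 * Xq) := by
                rw [← Real.exp_add]; ring_nf
            _ ≤ Real.exp (-(C₁ / 8 * Xq)) := by
                apply Real.exp_le_exp.2
                linarith
  -- complement inclusion
  set c : ℝ := (n : ℝ) ^ (1 - α) / L ^ 3 with hcdef
  have hc0 : 0 < c := by
    rw [hcdef]
    exact div_pos (Real.rpow_pos_of_pos hn0 _) (by positivity)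
  set E : Set Ω := {ω | ENNReal.ofReal c ≤
      ((SimpleGraph.fromRel (fun u v => X s(u, v) ω = true)).chromaticNumber :
        ℝ≥0∞)} with hEdef
  have hEc : Eᶜ ⊆ B := by
    intro ω hω
    set G := SimpleGraph.fromRel (fun u v => X s(u, v) ω = true) with hGdef
    have hω' : (G.chromaticNumber : ℝ≥0∞) < ENNReal.ofReal c := by
      simpa [hEdef, not_le] using hω
    have hcolfin : G.Colorable (Fintype.card (Fin n)) := G.colorable_of_fintype
    have hne : G.chromaticNumber ≠ ⊤ :=
      SimpleGraph.chromaticNumber_ne_top_iff_exists.2 ⟨_, hcolfin⟩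
    set k : ℕ := G.chromaticNumber.toNat with hkdef
    have hcol : G.Colorable k := G.colorable_chromaticNumber_of_fintype
    have hkχ : G.chromaticNumber = (k : ℕ∞) := (ENat.coe_toNat hne).symm
    have hklt : (k : ℝ) < c := by
      rw [hkχ] at hω'
      rw [ENat.toENNReal_coe, ← ENNReal.ofReal_natCast,
        ENNReal.ofReal_lt_ofReal_iff hc0] at hω'
      exact hω'
    have hct : c * t = (n : ℝ) := by
      have e1 : (n : ℝ) ^ (1 - α) * (n : ℝ) ^ α = (n : ℝ) := by
        rw [← Real.rpow_add hn0]
        norm_num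
      have hl3 : (L : ℝ) ^ 3 ≠ 0 := by positivity
      have harith : (n : ℝ) ^ (1 - α) / L ^ 3 * ((n : ℝ) ^ α * L ^ 3)
          = (n : ℝ) ^ (1 - α) * (n : ℝ) ^ α * (L ^ 3 / L ^ 3) := by ring
      rw [hcdef, htdef, harith, div_self hl3, mul_one, e1]
    have hkm : k * (m - 1) < n := by
      have hcast : ((k * (m - 1) : ℕ) : ℝ) < (n : ℝ) := by
        push_cast [Nat.cast_sub (by omega : 1 ≤ m)]
        have hk0 : (0 : ℝ) ≤ (k : ℝ) := Nat.cast_nonneg k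
        have h1 : (k : ℝ) * ((m : ℝ) - 1) ≤ (k : ℝ) * t := by
          apply mul_le_mul_of_nonneg_left (by linarith) hk0
        have h2 : (k : ℝ) * t < c * t := by
          apply mul_lt_mul_of_pos_right hklt ht0
        linarith
      exact_mod_cast hcast
    obtain ⟨S, hScard, hSstab⟩ := exists_stable_of_colorable G hcol hkm (by omega)
    have hmem : S ∈ Finset.powersetCard m (univ : Finset (Fin n)) :=
      Finset.mem_powersetCard.2 ⟨Finset.subset_univ S, hScard⟩
    refine Set.mem_biUnion hmem ?_
    rw [hTdef]
    refine Set.mem_iInter₂.2 fun e he => ?_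
    obtain ⟨x, hx, rfl⟩ := Finset.mem_image.1 he
    have hxd := Finset.mem_offDiag.1 hx
    show X s(x.1, x.2) ω = false
    by_contra h
    have htrue : X s(x.1, x.2) ω = true := by
      simpa [Bool.not_eq_false] using h
    have hadj : G.Adj x.1 x.2 := by
      rw [hGdef, SimpleGraph.fromRel_adj]
      exact ⟨hxd.2.2, Or.inl htrue⟩
    exact hSstab x.1 hxd.1 x.2 hxd.2.1 hadj
  -- finish
  have hEcP : P Eᶜ ≤ ENNReal.ofReal
      (Real.exp (-(C₁ / 8) * (n : ℝ) ^ (2 * α - βlow) * Real.log n ^ 6)) := by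
    have : -(C₁ / 8 * Xq) = -(C₁ / 8) * (n : ℝ) ^ (2 * α - βlow) * Real.log n ^ 6 := by
      rw [hXqdef, hLdef]; ring
    calc P Eᶜ ≤ P B := measure_mono hEc
      _ ≤ ENNReal.ofReal (Real.exp (-(C₁ / 8 * Xq))) := hB
      _ = _ := by rw [this]
  refine tsub_le_iff_right.mpr ?_
  calc (1 : ℝ≥0∞) = P Set.univ := measure_univ.symm
    _ = P (E ∪ Eᶜ) := by rw [Set.union_compl_self]
    _ ≤ P E + P Eᶜ := measure_union_le _ _
    _ ≤ P E + ENNReal.ofReal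
        (Real.exp (-(C₁ / 8) * (n : ℝ) ^ (2 * α - βlow) * Real.log n ^ 6)) :=
      add_le_add_right hEcP _
end
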